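/- For every distribution μ on a finite set Ω and every ρ = 1/r with r ∈ ℕ, there exists a ρ-quantized distribution μ' on Ω such that μ'(x) ∈ {ρ·⌈μ(x)/ρ⌉, ρ·⌊μ(x)/ρ⌋} for every x ∈ Ω. In particular, μ'(x) = μ(x) whenever μ(x) ∈ {0,1}, |μ(x) − μ'(x)| < ρ for all x ∈ Ω, and dTV(μ,μ') < (ρ/2)·|Ω|. -/
import Mathlib


open scoped BigOperators

namespace HugeObject

noncomputable section

/-- A finitely supported probability distribution on `Ω`, given by its mass function. -/
def IsDist {Ω : Type*} (μ : Ω → ℝ) : Prop :=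
  (∀ x, 0 ≤ μ x) ∧ (Function.support μ).Finite ∧ ∑ᶠ x, μ x = 1

/-- Total variation distance between two mass functions. -/
def dTV {Ω : Type*} (μ τ : Ω → ℝ) : ℝ :=
  (1 / 2) * ∑ᶠ x, |μ x - τ x|

/-- `T` is a transfer distribution (coupling) between `μ` and `τ`. -/
def IsCoupling {A B : Type*} (T : A × B → ℝ) (μ : A → ℝ) (τ : B → ℝ) : Prop :=
  IsDist T ∧ (∀ a, ∑ᶠ b, T (a, b) = μ a) ∧ (∀ b, ∑ᶠ a, T (a, b) = τ b)

/-- Earth Mover distance with respect to a distance function `d`: the infimum, over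
all transfer distributions between `μ` and `τ`, of the expected distance. -/
def dEM {Ω : Type*} (d : Ω → Ω → ℝ) (μ τ : Ω → ℝ) : ℝ :=
  sInf {c | ∃ T : Ω × Ω → ℝ, IsCoupling T μ τ ∧ c = ∑ᶠ p : Ω × Ω, T p * d p.1 p.2}

/-- η-weighted ℓ1 distance between vectors. -/
def wl1 {A : Type*} (η : A → ℝ) (x y : A → ℝ) : ℝ := ∑ᶠ a, η a * |x a - y a|

/-- A distribution on vectors is supported on `[0,1]^A`. -/
def SuppIn01 {A : Type*} (Λ : (A → ℝ) → ℝ) : Prop :=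
  ∀ t, Λ t ≠ 0 → ∀ a, t a ∈ Set.Icc (0 : ℝ) 1

/-- Empirical distribution of the tuple `t` (distribution of `t I` for uniform `I`). -/
def empDist {n : ℕ} {α : Type*} (t : Fin n → α) : α → ℝ :=
  fun u => (Nat.card {i : Fin n // t i = u} : ℝ) / n

/-- Normalized Hamming distance on `{0,1}^n`. -/
def normHamming (n : ℕ) (x y : Fin n → Bool) : ℝ :=
  (Nat.card {i : Fin n // x i ≠ y i} : ℝ) / n

section Detailing

variable {n : ℕ} {A : Type*} [Fintype A]

/-- Weight distribution (second marginal) of a detailing. -/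
def weight (ξ : (Fin n → Bool) × A → ℝ) (a : A) : ℝ := ∑ x : Fin n → Bool, ξ (x, a)

/-- `ξ` is a detailing of `μ` with respect to `A`: a distribution on
`{0,1}^n × A` whose first marginal is `μ`. -/
def IsDetailing (ξ : (Fin n → Bool) × A → ℝ) (μ : (Fin n → Bool) → ℝ) : Prop :=
  IsDist ξ ∧ ∀ x, ∑ a : A, ξ (x, a) = μ x

/-- Component distribution `μ_a` of a detailing. -/
def component (ξ : (Fin n → Bool) × A → ℝ) (a : A) : (Fin n → Bool) → ℝ :=
  fun x => ξ (x, a) / weight ξ a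

/-- The type of index `i`: `t_i a = Pr_{x ~ μ_a} [x i = 1]` (0 when the weight vanishes). -/
def typeOf (ξ : (Fin n → Bool) × A → ℝ) (i : Fin n) : A → ℝ :=
  fun a => (∑ x : Fin n → Bool, if x i then ξ (x, a) else 0) / weight ξ a

/-- The type distribution of a detailing: distribution of `typeOf ξ I` for uniform `I`. -/
def typeDist (ξ : (Fin n → Bool) × A → ℝ) : (A → ℝ) → ℝ :=
  empDist (fun i : Fin n => typeOf ξ i)

/-- The index of a detailing. -/
def ind (ξ : (Fin n → Bool) × A → ℝ) : ℝ :=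
  (∑ i : Fin n, ∑ a : A, weight ξ a * typeOf ξ i a ^ 2) / n

end Detailing

section Goodness

variable {n q : ℕ}

/-- Marginal of coordinate `j`. -/
def margAt (ν : (Fin n → Bool) → ℝ) (j : Fin n) : Bool → ℝ :=
  fun b => ∑ x : Fin n → Bool, if x j = b then ν x else 0

/-- Joint distribution of the coordinates listed in `J`. -/
def jointAt (ν : (Fin n → Bool) → ℝ) (J : Fin q → Fin n) : (Fin q → Bool) → ℝ :=
  fun y => ∑ x : Fin n → Bool, if ∀ ℓ, x (J ℓ) = y ℓ then ν x else 0

/-- The tuple `J` is ε-independent with respect to `ν`. -/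
def EpsIndep (ε : ℝ) (ν : (Fin n → Bool) → ℝ) (J : Fin q → Fin n) : Prop :=
  dTV (jointAt ν J) (fun y => ∏ ℓ, margAt ν (J ℓ) (y ℓ)) ≤ ε

/-- A distribution on `{0,1}^n` is (ε,q)-good. -/
def IsGoodDist (ε : ℝ) (q : ℕ) (ν : (Fin n → Bool) → ℝ) : Prop :=
  (1 - ε) * (n : ℝ) ^ q ≤ (Nat.card {J : Fin q → Fin n // EpsIndep ε ν J} : ℝ)

/-- A detailing is (ε,q)-good. -/
def IsGoodDetailing {A : Type*} [Fintype A] (ε : ℝ) (q : ℕ)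
    (ξ : (Fin n → Bool) × A → ℝ) : Prop :=
  ∃ J : Finset A, 1 - ε ≤ ∑ a ∈ J, weight ξ a ∧ ∀ a ∈ J, IsGoodDist ε q (component ξ a)

end Goodness

/-- The simulated distribution `D_sim(η, Λ)` on `{0,1}^{s×q}`. -/
def Dsim {A : Type*} [Fintype A] (s q : ℕ) (η : A → ℝ) (Λ : (A → ℝ) → ℝ) :
    (Fin s → Fin q → Bool) → ℝ :=
  fun M => ∑ᶠ T : Fin q → (A → ℝ),
    (∏ j, Λ (T j)) * ∑ a : Fin s → A, (∏ i, η (a i)) *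
      ∏ i : Fin s, ∏ j : Fin q, if M i j then T j (a i) else 1 - T j (a i)

/-- The canonical (s,q) test distribution `D_test` for `μ`. -/
def Dtest (s q n : ℕ) (μ : (Fin n → Bool) → ℝ) : (Fin s → Fin q → Bool) → ℝ :=
  fun M => (∑ J : Fin q → Fin n, ∑ x : Fin s → Fin n → Bool,
    (∏ i, μ (x i)) * (if ∀ i ℓ, x i (J ℓ) = M i ℓ then (1 : ℝ) else 0)) / (n : ℝ) ^ q

/-- Flat refinement of the detailing `ξ` with respect to `η` on `A × B`. -/
def flatRef {n : ℕ} {A B : Type*} [Fintype A] (ξ : (Fin n → Bool) × A → ℝ)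
    (η : A × B → ℝ) : (Fin n → Bool) × (A × B) → ℝ :=
  fun p => η p.2 * component ξ p.2.1 p.1

/-- One-step transition probability of the Change-types construction:
probability of outputting `yi` at a coordinate with source value `xi`,
source type value `h1` and target type value `h2`. -/
def flipStep (h1 h2 : ℝ) (xi yi : Bool) : ℝ :=
  if xi then (if yi then 1 - max 0 ((h1 - h2) / h1) else max 0 ((h1 - h2) / h1))
  else (if yi then max 0 ((h2 - h1) / (1 - h1)) else 1 - max 0 ((h2 - h1) / (1 - h1)))

/-- The output distribution `Ξ` of the Change-types construction. -/
def changeTypes {n : ℕ} {A B : Type*} [Fintype A] (ξ : (Fin n → Bool) × A → ℝ)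
    (η : A × B → ℝ) (H : Fin n → (A × B → ℝ) × (A × B → ℝ)) :
    (Fin n → Bool) × (Fin n → Bool) × (A × B) → ℝ :=
  fun p => η p.2.2 * component ξ p.2.2.1 p.1 *
    ∏ i, flipStep ((H i).1 p.2.2) ((H i).2 p.2.2) (p.1 i) (p.2.1 i)

/-- Pushforward of a mass function along `f`. -/
def push {α β : Type*} (f : α → β) (μ : α → ℝ) : β → ℝ :=
  fun b => ∑ᶠ a ∈ {a | f a = b}, μ a

/-- Rounding to the nearest integer multiple of `ρ`. -/
def roundMul (ρ x : ℝ) : ℝ := ρ * round (x / ρ)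

/-- Adjustment of `η` to `ν`. -/
def adjust {A B : Type*} [Fintype B] (ν : A → ℝ) (η : A × B → ℝ) : A × B → ℝ :=
  fun p => ν p.1 * (η p / ∑ b : B, η (p.1, b))

end
end HugeObject

open HugeObject

private lemma ceil_helper (y : ℝ) :
    ⌈y⌉ = ⌊y⌋ + (if (⌊y⌋ : ℝ) = y then 0 else 1) := by
  by_cases h : (⌊y⌋ : ℝ) = y
  · rw [if_pos h, add_zero, ← h]
    simp
  · rw [if_neg h]
    have h1 : ⌈y⌉ ≤ ⌊y⌋ + 1 := by
      apply Int.ceil_le.2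
      push_cast
      exact (Int.lt_floor_add_one y).le
    have h2 : ⌊y⌋ < ⌈y⌉ := by
      have : (⌊y⌋ : ℝ) < y := lt_of_le_of_ne (Int.floor_le y) h
      exact_mod_cast this.trans_le (Int.le_ceil y)
    exact le_antisymm h1 h2

/-- any distribution on a finite set can be ρ-quantized by rounding
each value up or down to a multiple of ρ, preserving 0/1 values, changing each
value by less than ρ, and changing total variation by less than (ρ/2)·|Ω|. -/
theorem quantization_of_distribution {Ω : Type*} [Fintype Ω]
    (μ : Ω → ℝ) (hμ : IsDist μ) (r : ℕ) (hr : 0 < r) (ρ : ℝ) (hρ : ρ = 1 / r) :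
    ∃ μ' : Ω → ℝ, IsDist μ' ∧
      (∀ x, ∃ k : ℤ, μ' x = k * ρ) ∧
      (∀ x, μ' x = ρ * ⌈μ x / ρ⌉ ∨ μ' x = ρ * ⌊μ x / ρ⌋) ∧
      (∀ x, μ x = 0 ∨ μ x = 1 → μ' x = μ x) ∧
      (∀ x, |μ x - μ' x| < ρ) ∧
      dTV μ μ' < ρ / 2 * Fintype.card Ω := by
  classical
  obtain ⟨hpos, -, hsum⟩ := hμ
  have hρ0 : (0 : ℝ) < ρ := by rw [hρ]; positivity
  have hsum' : ∑ x, μ x = 1 := by rw [← finsum_eq_sum_of_fintype]; exact hsum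
  set F : Ω → ℤ := fun x => ⌊μ x / ρ⌋ with hF
  set Frac : Finset Ω :=
    Finset.univ.filter (fun x => ¬ ((⌊μ x / ρ⌋ : ℝ) = μ x / ρ)) with hFrac
  have hdivsum : ∑ x, μ x / ρ = (r : ℝ) := by
    rw [← Finset.sum_div, hsum', hρ]
    field_simp
  have hFle : ∑ x, F x ≤ (r : ℤ) := by
    have : ((∑ x, F x : ℤ) : ℝ) ≤ (r : ℝ) := by
      push_cast
      rw [← hdivsum]
      exact Finset.sum_le_sum fun x _ => Int.floor_le _
    exact_mod_cast this
  have hceil : (r : ℤ) ≤ ∑ x, ⌈μ x / ρ⌉ := by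
    have : (r : ℝ) ≤ ((∑ x, ⌈μ x / ρ⌉ : ℤ) : ℝ) := by
      push_cast
      rw [← hdivsum]
      exact Finset.sum_le_sum fun x _ => Int.le_ceil _
    exact_mod_cast this
  have hcard : (Frac.card : ℤ) =
      ∑ x : Ω, (if (⌊μ x / ρ⌋ : ℝ) = μ x / ρ then 0 else 1) := by
    rw [hFrac, Finset.card_filter, Nat.cast_sum]
    refine Finset.sum_congr rfl fun x _ => ?_
    by_cases h : (⌊μ x / ρ⌋ : ℝ) = μ x / ρ
    · rw [if_pos h, if_neg (not_not_intro h)]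
      norm_num
    · rw [if_neg h, if_pos h]
      norm_num
  have hceilsum : ∑ x, ⌈μ x / ρ⌉ = (∑ x, F x) + Frac.card := by
    rw [Finset.sum_congr rfl fun x (_ : x ∈ Finset.univ) => ceil_helper (μ x / ρ),
      Finset.sum_add_distrib, hcard]
  set S : ℤ := (r : ℤ) - ∑ x, F x with hS
  have hS0 : 0 ≤ S := sub_nonneg.2 hFle
  have hSle' : S ≤ (Frac.card : ℤ) := by rw [hS]; linarith [hceil, hceilsum]
  have hSle : S.toNat ≤ Frac.card := Int.toNat_le.2 hSle'
  obtain ⟨T, hTsub, hTcard⟩ := Finset.exists_subset_card_eq hSle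
  set μ' : Ω → ℝ := fun x => ρ * ((F x : ℝ) + if x ∈ T then 1 else 0) with hμ'
  have hμ'x : ∀ x, μ' x = ρ * ((F x : ℝ) + if x ∈ T then 1 else 0) := fun x => rfl
  have hFpos : ∀ x, 0 ≤ F x := fun x => Int.floor_nonneg.2 (div_nonneg (hpos x) hρ0.le)
  have hμ'pos : ∀ x, 0 ≤ μ' x := by
    intro x
    have : (0:ℝ) ≤ (F x : ℝ) := by exact_mod_cast hFpos x
    rw [hμ'x]
    split <;> nlinarith
  have hTsum : ∑ x : Ω, (if x ∈ T then (1:ℝ) else 0) = (S : ℝ) := by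
    rw [Finset.sum_ite_mem, Finset.univ_inter, Finset.sum_const, nsmul_eq_mul, mul_one,
      hTcard]
    exact_mod_cast congrArg (fun z : ℤ => (z : ℝ)) (Int.toNat_of_nonneg hS0)
  have hμ'sum : ∑ x, μ' x = 1 := by
    have hr0 : (r : ℝ) ≠ 0 := by positivity
    have h2 : ∑ x : Ω, ((F x : ℝ)) = ((∑ x, F x : ℤ) : ℝ) := by push_cast; ring
    calc ∑ x, μ' x = ρ * ((∑ x : Ω, (F x : ℝ)) + (S : ℝ)) := by
          rw [← hTsum, ← Finset.sum_add_distrib, Finset.mul_sum]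
      _ = ρ * (r : ℝ) := by rw [h2, hS]; push_cast; ring
      _ = 1 := by rw [hρ]; field_simp
  have hnotT : ∀ x, (⌊μ x / ρ⌋ : ℝ) = μ x / ρ → x ∉ T := by
    intro x hx hxT
    have := hTsub hxT
    rw [hFrac, Finset.mem_filter] at this
    exact this.2 hx
  have habs : ∀ x, |μ x - μ' x| < ρ := by
    intro x
    have hfl : (⌊μ x / ρ⌋ : ℝ) ≤ μ x / ρ := Int.floor_le _
    have hfl2 : μ x / ρ < (⌊μ x / ρ⌋ : ℝ) + 1 := Int.lt_floor_add_one _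
    have hdiv : μ x / ρ * ρ = μ x := div_mul_cancel₀ _ (ne_of_gt hρ0)
    have e1 : ρ * (F x : ℝ) ≤ μ x := by
      have := mul_le_mul_of_nonneg_left hfl hρ0.le
      rw [mul_comm ρ (μ x / ρ), hdiv] at this
      simpa [hF] using this
    have e2 : μ x < ρ * ((F x : ℝ) + 1) := by
      have := mul_lt_mul_of_pos_left hfl2 hρ0
      rw [mul_comm ρ (μ x / ρ), hdiv] at this
      simpa [hF] using this
    rw [hμ'x, abs_lt]
    by_cases hx : x ∈ T
    · have hfr : (⌊μ x / ρ⌋ : ℝ) < μ x / ρ := by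
        refine lt_of_le_of_ne hfl fun h => ?_
        exact hnotT x h hx
      have e1' : ρ * (F x : ℝ) < μ x := by
        have := mul_lt_mul_of_pos_left hfr hρ0
        rw [mul_comm ρ (μ x / ρ), hdiv] at this
        simpa [hF] using this
      rw [if_pos hx]
      constructor <;> nlinarith
    · rw [if_neg hx]
      constructor <;> nlinarith
  refine ⟨μ', ⟨hμ'pos, Set.toFinite _, by rw [finsum_eq_sum_of_fintype]; exact hμ'sum⟩,
    ?_, ?_, ?_, ?_, ?_⟩
  · intro x
    refine ⟨F x + if x ∈ T then 1 else 0, ?_⟩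
    rw [hμ'x]
    push_cast
    split <;> ring
  · intro x
    by_cases hx : x ∈ T
    · left
      have hfr : ¬ ((⌊μ x / ρ⌋ : ℝ) = μ x / ρ) := by
        have := hTsub hx
        rw [hFrac, Finset.mem_filter] at this
        exact this.2
      have hc : ⌈μ x / ρ⌉ = F x + 1 := by
        rw [ceil_helper]; simp [hfr, hF]
      rw [hμ'x, hc, if_pos hx]
      push_cast
      ring
    · right
      rw [hμ'x, if_neg hx]
      ring
  · intro x hx
    rcases hx with hx | hx
    · have h0 : μ x / ρ = 0 := by rw [hx]; ring
      have hfl : (⌊μ x / ρ⌋ : ℝ) = μ x / ρ := by rw [h0]; norm_num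
      rw [hμ'x, if_neg (hnotT x hfl), hF]
      simp [h0, hx]
    · have hr0 : (r : ℝ) ≠ 0 := by positivity
      have h0 : μ x / ρ = (r : ℝ) := by
        rw [hx, hρ]
        field_simp
      have hfl : (⌊μ x / ρ⌋ : ℝ) = μ x / ρ := by rw [h0]; norm_num
      rw [hμ'x, if_neg (hnotT x hfl), hF]
      simp only [h0, Int.floor_natCast, add_zero]
      rw [hx, hρ]
      push_cast
      field_simp
  · exact habs
  · have hne : (Finset.univ : Finset Ω).Nonempty := by
      by_contra h
      rw [Finset.not_nonempty_iff_eq_empty] at h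
      rw [h, Finset.sum_empty] at hsum'
      norm_num at hsum'
    rw [dTV, finsum_eq_sum_of_fintype]
    have hlt : ∑ x, |μ x - μ' x| < ∑ _x : Ω, ρ :=
      Finset.sum_lt_sum_of_nonempty hne fun x _ => habs x
    rw [Finset.sum_const, Finset.card_univ, nsmul_eq_mul] at hlt
    nlinarith
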